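/- Let T : E → F be a continuous linear surjection between Banach spaces and let ε > 0. Then there exists a continuous map s : F → E with T(s(y)) = y and ‖s(y)‖ ≤ (1+ε)·inf{‖x‖ : T(x) = y} for all y ∈ F. -/

import Mathlib

open Metric Set Filter Topology

section BGaux

variable {E F : Type*} [NormedAddCommGroup E] [NormedSpace ℝ E]
  [NormedAddCommGroup F] [NormedSpace ℝ F]

/-- The quotient norm: infimum of norms over the fiber. -/
noncomputable def BGq (T : E →L[ℝ] F) (y : F) : ℝ := sInf (Norm.norm '' (T ⁻¹' {y}))

variable {T : E →L[ℝ] F}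

lemma BGq_bdd (y : F) : BddBelow (Norm.norm '' (T ⁻¹' {y})) := by
  refine ⟨0, ?_⟩
  rintro r ⟨x, -, rfl⟩
  exact norm_nonneg x

lemma BGq_le {x : E} {y : F} (hx : T x = y) : BGq T y ≤ ‖x‖ :=
  csInf_le (BGq_bdd y) ⟨x, hx, rfl⟩

lemma BGq_nonempty (hT : Function.Surjective T) (y : F) :
    (Norm.norm '' (T ⁻¹' {y})).Nonempty := by
  obtain ⟨x, hx⟩ := hT y
  exact ⟨‖x‖, x, hx, rfl⟩

lemma BGq_nonneg (hT : Function.Surjective T) (y : F) : 0 ≤ BGq T y := by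
  refine le_csInf (BGq_nonempty hT y) ?_
  rintro r ⟨x, -, rfl⟩
  exact norm_nonneg x

lemma BGq_exists_lt (hT : Function.Surjective T) {η : ℝ} (hη : 0 < η) (y : F) :
    ∃ x, T x = y ∧ ‖x‖ < BGq T y + η := by
  obtain ⟨r, ⟨x, hx, rfl⟩, hr⟩ :=
    exists_lt_of_csInf_lt (BGq_nonempty hT y) (lt_add_of_pos_right (BGq T y) hη)
  exact ⟨x, hx, hr⟩

lemma BGq_le_norm {C : ℝ} (hC : ∀ y, ∃ x, T x = y ∧ ‖x‖ ≤ C * ‖y‖) (y : F) :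
    BGq T y ≤ C * ‖y‖ := by
  obtain ⟨x, hx, hxn⟩ := hC y
  exact (BGq_le hx).trans hxn

lemma BGq_le_add (hT : Function.Surjective T) {C : ℝ}
    (hC : ∀ y, ∃ x, T x = y ∧ ‖x‖ ≤ C * ‖y‖) (a b : F) :
    BGq T a ≤ BGq T b + C * ‖a - b‖ := by
  apply le_of_forall_sub_le
  intro η hη
  obtain ⟨xb, hxb, hxbn⟩ := BGq_exists_lt hT hη b
  obtain ⟨xd, hxd, hxdn⟩ := hC (a - b)
  have hfib : T (xb + xd) = a := by rw [map_add, hxb, hxd]; abel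
  have h1 : BGq T a ≤ ‖xb + xd‖ := BGq_le hfib
  have h2 : ‖xb + xd‖ ≤ ‖xb‖ + ‖xd‖ := norm_add_le _ _
  linarith

lemma BGq_continuous (hT : Function.Surjective T) {C : ℝ} (hC0 : 0 < C)
    (hC : ∀ y, ∃ x, T x = y ∧ ‖x‖ ≤ C * ‖y‖) : Continuous (BGq T) := by
  have : LipschitzWith (Real.toNNReal C) (BGq T) := by
    rw [lipschitzWith_iff_dist_le_mul]
    intro a b
    rw [Real.dist_eq, dist_eq_norm, Real.coe_toNNReal C hC0.le, abs_sub_le_iff]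
    have h1 := BGq_le_add hT hC a b
    have h2 := BGq_le_add hT hC b a
    rw [norm_sub_rev] at h2
    constructor <;> linarith
  exact this.continuous

lemma BGq_zero (hT : Function.Surjective T) : BGq T (0 : F) = 0 := by
  have h1 : BGq T (0 : F) ≤ ‖(0 : E)‖ := BGq_le (map_zero T)
  simpa using le_antisymm (by simpa using h1) (BGq_nonneg hT 0)

lemma BGq_smul_le (hT : Function.Surjective T) {c : ℝ} (hc : 0 < c) (y : F) :
    BGq T (c • y) ≤ c * BGq T y := by
  apply le_of_forall_sub_le
  intro η hη
  obtain ⟨x, hx, hxn⟩ := BGq_exists_lt hT (div_pos hη hc) y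
  have hfib : T (c • x) = c • y := by rw [map_smul, hx]
  have h1 : BGq T (c • y) ≤ ‖c • x‖ := BGq_le hfib
  have h2 : ‖c • x‖ = c * ‖x‖ := by rw [norm_smul, Real.norm_of_nonneg hc.le]
  have h3 : c * ‖x‖ ≤ c * (BGq T y + η / c) := by
    exact mul_le_mul_of_nonneg_left hxn.le hc.le
  have h4 : c * (BGq T y + η / c) = c * BGq T y + η := by
    rw [mul_add, mul_div_cancel₀ _ hc.ne']
  linarith

lemma BGq_smul (hT : Function.Surjective T) {c : ℝ} (hc : 0 ≤ c) (y : F) :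
    BGq T (c • y) = c * BGq T y := by
  rcases hc.eq_or_lt with h | h
  · subst h; simp [BGq_zero hT]
  · refine le_antisymm (BGq_smul_le hT h y) ?_
    have := BGq_smul_le hT (inv_pos.2 h) (c • y)
    rw [smul_smul, inv_mul_cancel₀ h.ne', one_smul] at this
    calc c * BGq T y ≤ c * (c⁻¹ * BGq T (c • y)) := mul_le_mul_of_nonneg_left this h.le
      _ = BGq T (c • y) := by field_simp

lemma BGq_norm_le_opNorm (hT : Function.Surjective T) (y : F) :
    ‖y‖ ≤ ‖T‖ * BGq T y := by
  apply le_of_forall_sub_le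
  intro η hη
  have hpos : 0 < η / (‖T‖ + 1) := div_pos hη (by positivity)
  obtain ⟨x, hx, hxn⟩ := BGq_exists_lt hT hpos y
  have h1 : ‖y‖ ≤ ‖T‖ * ‖x‖ := by rw [← hx]; exact T.le_opNorm x
  have h2 : ‖T‖ * ‖x‖ ≤ ‖T‖ * (BGq T y + η / (‖T‖ + 1)) :=
    mul_le_mul_of_nonneg_left hxn.le (norm_nonneg T)
  have h3 : ‖T‖ * (η / (‖T‖ + 1)) ≤ η := by
    rw [div_eq_inv_mul, ← mul_assoc]
    have : ‖T‖ * (‖T‖ + 1)⁻¹ ≤ 1 := by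
      rw [mul_inv_le_iff₀ (by positivity)]
      linarith [norm_nonneg T]
    nlinarith
  nlinarith [norm_nonneg T]

lemma BG_mem_sphere {y : F} (hy : y ≠ 0) : ‖y‖⁻¹ • y ∈ sphere (0 : F) 1 := by
  have h : ‖y‖ ≠ 0 := norm_ne_zero_iff.2 hy
  simp [mem_sphere_zero_iff_norm, norm_smul, inv_mul_cancel₀ h, abs_of_nonneg (norm_nonneg y)]

open Classical in
/-- Positively homogeneous extension of a map defined on the unit sphere. -/
noncomputable def BGhomExt (φ : ↥(sphere (0 : F) 1) → E) (y : F) : E :=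
  if hy : y = 0 then 0 else ‖y‖ • φ ⟨‖y‖⁻¹ • y, BG_mem_sphere hy⟩

lemma BGhomExt_zero (φ : ↥(sphere (0 : F) 1) → E) : BGhomExt φ 0 = 0 := by simp [BGhomExt]

lemma BGhomExt_apply (φ : ↥(sphere (0 : F) 1) → E) {y : F} (hy : y ≠ 0) :
    BGhomExt φ y = ‖y‖ • φ ⟨‖y‖⁻¹ • y, BG_mem_sphere hy⟩ := by
  simp only [BGhomExt]
  rw [dif_neg hy]

lemma BGhomExt_norm_le {φ : ↥(sphere (0 : F) 1) → E} {M : ℝ} (hM : 0 ≤ M)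
    (hb : ∀ z, ‖φ z‖ ≤ M) (y : F) : ‖BGhomExt φ y‖ ≤ M * ‖y‖ := by
  rcases eq_or_ne y 0 with rfl | hy
  · simp [BGhomExt_zero]
  · rw [BGhomExt_apply φ hy, norm_smul, Real.norm_of_nonneg (norm_nonneg y)]
    rw [mul_comm M ‖y‖]
    exact mul_le_mul_of_nonneg_left (hb _) (norm_nonneg y)

lemma BGhomExt_continuous {φ : ↥(sphere (0 : F) 1) → E} (hφ : Continuous φ)
    {M : ℝ} (hM : 0 ≤ M) (hb : ∀ z, ‖φ z‖ ≤ M) : Continuous (BGhomExt φ) := by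
  rw [continuous_iff_continuousAt]
  intro y₀
  rcases eq_or_ne y₀ 0 with rfl | hy₀
  · unfold ContinuousAt
    rw [BGhomExt_zero]
    apply squeeze_zero_norm (BGhomExt_norm_le hM hb)
    have : Continuous (fun y : F => M * ‖y‖) := continuous_const.mul continuous_norm
    simpa using this.tendsto 0
  · have hopen : IsOpen {y : F | y ≠ 0} := isOpen_compl_singleton
    have hsub : ContinuousOn (BGhomExt φ) {y : F | y ≠ 0} := by
      rw [continuousOn_iff_continuous_restrict]
      have heq : ∀ y : {y : F // y ∈ {y : F | y ≠ 0}},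
          ({y : F | y ≠ 0}).restrict (BGhomExt φ) y
            = ‖(y : F)‖ • φ ⟨‖(y : F)‖⁻¹ • (y : F), BG_mem_sphere y.2⟩ := by
        intro y
        exact BGhomExt_apply φ y.2
      change Continuous (({y : F | y ≠ 0}).restrict (BGhomExt φ))
      rw [funext heq]
      have hnorm : Continuous fun y : {y : F // y ∈ {y : F | y ≠ 0}} => ‖(y : F)‖ :=
        continuous_subtype_val.norm
      have hne : ∀ y : {y : F // y ∈ {y : F | y ≠ 0}}, ‖(y : F)‖ ≠ 0 :=
        fun y => norm_ne_zero_iff.2 y.2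
      have hP : Continuous fun y : {y : F // y ∈ {y : F | y ≠ 0}} =>
          (⟨‖(y : F)‖⁻¹ • (y : F), BG_mem_sphere y.2⟩ : ↥(sphere (0 : F) 1)) := by
        apply Continuous.subtype_mk
        exact (hnorm.inv₀ hne).smul continuous_subtype_val
      exact hnorm.smul (hφ.comp hP)
    exact hsub.continuousAt (hopen.mem_nhds hy₀)

end BGaux

/-- Michael, Continuous Selections I, Prop. 7.2: a continuous section with
pointwise norm within a factor (1+ε) of the minimal possible. -/
theorem bartle_graves_almost_minimal
    {E F : Type*} [NormedAddCommGroup E] [NormedSpace ℝ E] [CompleteSpace E]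
    [NormedAddCommGroup F] [NormedSpace ℝ F] [CompleteSpace F]
    (T : E →L[ℝ] F) (hT : Function.Surjective T) {ε : ℝ} (hε : 0 < ε) :
    ∃ s : F → E, Continuous s ∧ (∀ y, T (s y) = y) ∧
      ∀ y, ‖s y‖ ≤ (1 + ε) * sInf (Norm.norm '' (T ⁻¹' {y})) := by
  classical
  open Metric Set Filter Topology in
  obtain ⟨C, hC0, hC⟩ := T.exists_preimage_norm_le hT
  set δ : ℝ := ε / 2 with hδdef
  set β : ℝ := ε / (2 * (1 + ε)) with hβdef
  have hδ0 : 0 < δ := by positivity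
  have hβ0 : 0 < β := by positivity
  have hβ1 : β < 1 := by
    rw [hβdef, div_lt_one (by positivity)]
    nlinarith
  have h1β : (0:ℝ) < 1 - β := by linarith
  set θ : ℝ := β / C with hθdef
  have hθ0 : 0 < θ := by positivity
  have hCθ : C * θ = β := by
    rw [hθdef, mul_div_cancel₀ _ hC0.ne']
  have hfe : (1:ℝ) + δ = (1 + ε) * (1 - β) := by
    rw [hδdef, hβdef]
    field_simp
    ring
  have hfactor : (1 + δ) * (1 - β)⁻¹ = 1 + ε := by
    rw [hfe, mul_assoc, mul_inv_cancel₀ h1β.ne', mul_one]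
  have hq_cont : Continuous (BGq T) := BGq_continuous hT hC0 hC
  set S := sphere (0:F) 1 with hSdef
  have hzx : ∀ z : S, ‖(z:F)‖ = 1 := fun z => mem_sphere_zero_iff_norm.1 z.2
  have hqz_pos : ∀ z : S, 0 < BGq T (z:F) := by
    intro z
    have h1 := BGq_norm_le_opNorm hT (z:F)
    rw [hzx z] at h1
    by_contra h
    push_neg at h
    have h2 := BGq_nonneg hT (z:F)
    have h3 : BGq T (z:F) = 0 := le_antisymm h h2
    rw [h3, mul_zero] at h1
    linarith
  have hqS : ∀ z : S, BGq T (z:F) ≤ C := by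
    intro z
    have := BGq_le_norm hC (z:F)
    rwa [hzx z, mul_one] at this
  -- the convex-valued carrier
  have hconv : ∀ z : S, Convex ℝ
      (ball (0:E) ((1+δ) * BGq T (z:F)) ∩ (T ⁻¹' ball (z:F) (θ * BGq T (z:F)))) := by
    intro z
    refine (convex_ball _ _).inter ?_
    exact (convex_ball _ _).is_linear_preimage ⟨map_add T, map_smul T⟩
  have hsel : ∃ g : C(S, E), ∀ z : S,
      g z ∈ ball (0:E) ((1+δ) * BGq T (z:F)) ∩ (T ⁻¹' ball (z:F) (θ * BGq T (z:F))) := by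
    apply exists_continuous_forall_mem_convex_of_local_const hconv
    intro z
    obtain ⟨x₀, hx₀, hx₀n⟩ := BGq_exists_lt hT (mul_pos hδ0 (hqz_pos z)) (z:F)
    refine ⟨x₀, ?_⟩
    set U : Set F := {y : F | ‖x₀‖ < (1+δ) * BGq T y ∧ dist (T x₀) y < θ * BGq T y} with hUdef
    have hUopen : IsOpen U := by
      refine IsOpen.inter ?_ ?_
      · exact isOpen_lt continuous_const (continuous_const.mul hq_cont)
      · exact isOpen_lt (continuous_const.dist continuous_id) (continuous_const.mul hq_cont)
    have hzU : (z:F) ∈ U := by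
      constructor
      · calc ‖x₀‖ < BGq T (z:F) + δ * BGq T (z:F) := hx₀n
          _ = (1+δ) * BGq T (z:F) := by ring
      · rw [hx₀, dist_self]
        exact mul_pos hθ0 (hqz_pos z)
    have hmem : U ∈ 𝓝 (z:F) := hUopen.mem_nhds hzU
    have hpre : (Subtype.val) ⁻¹' U ∈ 𝓝 z :=
      (continuous_subtype_val.continuousAt).preimage_mem_nhds hmem
    filter_upwards [hpre] with v hv
    exact ⟨mem_ball_zero_iff.2 hv.1, by rw [mem_preimage, mem_ball]; exact hv.2⟩
  obtain ⟨g, hg⟩ := hsel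
  have hg1 : ∀ z : S, ‖g z‖ < (1+δ) * BGq T (z:F) := fun z => mem_ball_zero_iff.1 (hg z).1
  have hg2 : ∀ z : S, ‖T (g z) - (z:F)‖ < θ * BGq T (z:F) := by
    intro z
    have := (hg z).2
    rwa [mem_preimage, mem_ball, dist_eq_norm] at this
  -- homogeneous extension G of g
  set G : F → E := BGhomExt (fun z => g z) with hGdef
  have hqhom : ∀ y : F, y ≠ 0 → BGq T y = ‖y‖ * BGq T (‖y‖⁻¹ • y) := by
    intro y hy
    conv_lhs => rw [← smul_inv_smul₀ (norm_ne_zero_iff.2 hy) y]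
    rw [BGq_smul hT (norm_nonneg y)]
  have hG1 : ∀ y, ‖G y‖ ≤ (1+δ) * BGq T y := by
    intro y
    rcases eq_or_ne y 0 with rfl | hy
    · simp [hGdef, BGhomExt_zero, BGq_zero hT]
    · rw [hGdef, BGhomExt_apply _ hy, norm_smul, Real.norm_of_nonneg (norm_nonneg y), hqhom y hy]
      have hz := (hg1 ⟨‖y‖⁻¹ • y, BG_mem_sphere hy⟩).le
      calc ‖y‖ * ‖g ⟨‖y‖⁻¹ • y, BG_mem_sphere hy⟩‖
          ≤ ‖y‖ * ((1+δ) * BGq T (‖y‖⁻¹ • y)) :=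
            mul_le_mul_of_nonneg_left hz (norm_nonneg y)
        _ = (1+δ) * (‖y‖ * BGq T (‖y‖⁻¹ • y)) := by ring
  have hG2 : ∀ y, ‖T (G y) - y‖ ≤ θ * BGq T y := by
    intro y
    rcases eq_or_ne y 0 with rfl | hy
    · simp [hGdef, BGhomExt_zero, BGq_zero hT]
    · have hyz : (‖y‖ : ℝ) • (‖y‖⁻¹ • y) = y := smul_inv_smul₀ (norm_ne_zero_iff.2 hy) y
      rw [hGdef, BGhomExt_apply _ hy, map_smul]
      calc ‖‖y‖ • T (g ⟨‖y‖⁻¹ • y, BG_mem_sphere hy⟩) - y‖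
          = ‖‖y‖ • (T (g ⟨‖y‖⁻¹ • y, BG_mem_sphere hy⟩) - ‖y‖⁻¹ • y)‖ := by
            rw [smul_sub, hyz]
        _ = ‖y‖ * ‖T (g ⟨‖y‖⁻¹ • y, BG_mem_sphere hy⟩) - ‖y‖⁻¹ • y‖ := by
            rw [norm_smul, Real.norm_of_nonneg (norm_nonneg y)]
        _ ≤ ‖y‖ * (θ * BGq T (‖y‖⁻¹ • y)) :=
            mul_le_mul_of_nonneg_left (hg2 ⟨‖y‖⁻¹ • y, BG_mem_sphere hy⟩).le (norm_nonneg y)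
        _ = θ * BGq T y := by rw [hqhom y hy]; ring
  have hgbnd : ∀ z : S, ‖g z‖ ≤ (1+δ) * C := by
    intro z
    calc ‖g z‖ ≤ (1+δ) * BGq T (z:F) := (hg1 z).le
      _ ≤ (1+δ) * C := mul_le_mul_of_nonneg_left (hqS z) (by linarith)
  have hGc : Continuous G :=
    BGhomExt_continuous g.continuous (by positivity) hgbnd
  -- iteration
  set Φ : F → F := fun v => v - T (G v) with hΦdef
  have hΦc : Continuous Φ := continuous_id.sub (T.continuous.comp hGc)
  set r : ℕ → F → F := fun n => Φ^[n] with hrdef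
  have hr0 : ∀ y, r 0 y = y := fun _ => rfl
  have hrsucc : ∀ n y, r (n+1) y = r n y - T (G (r n y)) := by
    intro n y
    rw [hrdef]
    simp only [Function.iterate_succ_apply' Φ n y]
    rfl
  have hrc : ∀ n, Continuous (r n) := fun n => hΦc.iterate n
  have hqΦ : ∀ v, BGq T (v - T (G v)) ≤ β * BGq T v := by
    intro v
    have h1 : BGq T (v - T (G v)) ≤ C * ‖v - T (G v)‖ := BGq_le_norm hC _
    have h2 : ‖v - T (G v)‖ ≤ θ * BGq T v := by
      rw [norm_sub_rev]; exact hG2 v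
    calc BGq T (v - T (G v)) ≤ C * (θ * BGq T v) :=
          h1.trans (mul_le_mul_of_nonneg_left h2 hC0.le)
      _ = β * BGq T v := by rw [← hCθ]; ring
  have hqr : ∀ n y, BGq T (r n y) ≤ β^n * BGq T y := by
    intro n
    induction n with
    | zero => intro y; simp [hr0]
    | succ n ih =>
      intro y
      rw [hrsucc]
      calc BGq T (r n y - T (G (r n y))) ≤ β * BGq T (r n y) := hqΦ _
        _ ≤ β * (β^n * BGq T y) := mul_le_mul_of_nonneg_left (ih y) hβ0.le
        _ = β^(n+1) * BGq T y := by ring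
  have hGr : ∀ n (z : S), ‖G (r n (z:F))‖ ≤ (1+δ) * BGq T (z:F) * β^n := by
    intro n z
    calc ‖G (r n (z:F))‖ ≤ (1+δ) * BGq T (r n (z:F)) := hG1 _
      _ ≤ (1+δ) * (β^n * BGq T (z:F)) :=
          mul_le_mul_of_nonneg_left (hqr n (z:F)) (by linarith)
      _ = (1+δ) * BGq T (z:F) * β^n := by ring
  set u : ℕ → ℝ := fun n => (1+δ) * C * β^n with hudef
  have hu : Summable u := (summable_geometric_of_lt_one hβ0.le hβ1).mul_left _
  have hbnd : ∀ (n : ℕ) (z : S), ‖G (r n (z:F))‖ ≤ u n := by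
    intro n z
    refine (hGr n z).trans ?_
    rw [hudef]
    have hqC := hqS z
    have hb : (0:ℝ) ≤ β^n := pow_nonneg hβ0.le n
    exact mul_le_mul_of_nonneg_right (mul_le_mul_of_nonneg_left hqC (by linarith)) hb
  set w : S → E := fun z => ∑' n, G (r n (z:F)) with hwdef
  have hwc : Continuous w := by
    rw [hwdef]
    exact continuous_tsum
      (fun n => hGc.comp ((hrc n).comp continuous_subtype_val)) hu (fun n z => hbnd n z)
  have hsum : ∀ z : S, Summable (fun n => G (r n (z:F))) :=
    fun z => Summable.of_norm_bounded hu (fun n => hbnd n z)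
  have hrlim : ∀ z : S, Filter.Tendsto (fun n => r n (z:F)) Filter.atTop (nhds 0) := by
    intro z
    apply squeeze_zero_norm (a := fun n => ‖T‖ * C * β ^ n)
    · intro n
      calc ‖r n (z:F)‖ ≤ ‖T‖ * BGq T (r n (z:F)) := BGq_norm_le_opNorm hT _
        _ ≤ ‖T‖ * (β^n * BGq T (z:F)) :=
            mul_le_mul_of_nonneg_left (hqr n (z:F)) (norm_nonneg T)
        _ ≤ ‖T‖ * (β^n * C) := by
            have hb : (0:ℝ) ≤ β^n := pow_nonneg hβ0.le n
            exact mul_le_mul_of_nonneg_left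
              (mul_le_mul_of_nonneg_left (hqS z) hb) (norm_nonneg _)
        _ = ‖T‖ * C * β^n := by ring
    · have := (tendsto_pow_atTop_nhds_zero_of_lt_one hβ0.le hβ1).const_mul (‖T‖ * C)
      simpa using this
  have hTw : ∀ z : S, T (w z) = (z:F) := by
    intro z
    have hmap : T (w z) = ∑' n, T (G (r n (z:F))) := by
      rw [hwdef]
      exact T.map_tsum (hsum z)
    have hsum2 : Summable (fun n => T (G (r n (z:F)))) := (hsum z).map T T.continuous
    have hps : Filter.Tendsto (fun n => ∑ k ∈ Finset.range n, T (G (r k (z:F))))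
        Filter.atTop (nhds (z:F)) := by
      have heq : ∀ n, ∑ k ∈ Finset.range n, T (G (r k (z:F))) = (z:F) - r n (z:F) := by
        intro n
        have hterm : ∀ k, T (G (r k (z:F))) = r k (z:F) - r (k+1) (z:F) := by
          intro k
          rw [hrsucc]
          abel
        rw [Finset.sum_congr rfl (fun k _ => hterm k),
          Finset.sum_range_sub' (fun k => r k (z:F)) n, hr0]
      rw [funext heq]
      have : Filter.Tendsto (fun n => (z:F) - r n (z:F)) Filter.atTop (nhds ((z:F) - 0)) :=
        tendsto_const_nhds.sub (hrlim z)
      simpa using this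
    have hhs := hsum2.hasSum.tendsto_sum_nat
    rw [hmap, tendsto_nhds_unique hhs hps]
  have hwnorm : ∀ z : S, ‖w z‖ ≤ (1+δ) * (1-β)⁻¹ * BGq T (z:F) := by
    intro z
    have hsn : Summable (fun n => ‖G (r n (z:F))‖) :=
      Summable.of_nonneg_of_le (fun n => norm_nonneg _) (fun n => hbnd n z) hu
    have hsg : Summable (fun n : ℕ => (1+δ) * BGq T (z:F) * β^n) :=
      (summable_geometric_of_lt_one hβ0.le hβ1).mul_left _
    have h1 : ‖w z‖ ≤ ∑' n, ‖G (r n (z:F))‖ := by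
      rw [hwdef]
      exact norm_tsum_le_tsum_norm hsn
    have h2 : ∑' n, ‖G (r n (z:F))‖ ≤ ∑' n : ℕ, (1+δ) * BGq T (z:F) * β^n :=
      Summable.tsum_le_tsum (fun n => hGr n z) hsn hsg
    have h3 : ∑' n : ℕ, (1+δ) * BGq T (z:F) * β^n = (1+δ) * BGq T (z:F) * (1-β)⁻¹ := by
      rw [tsum_mul_left, tsum_geometric_of_lt_one hβ0.le hβ1]
    calc ‖w z‖ ≤ (1+δ) * BGq T (z:F) * (1-β)⁻¹ := by rw [← h3]; exact h1.trans h2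
      _ = (1+δ) * (1-β)⁻¹ * BGq T (z:F) := by ring
  have hwM : ∀ z : S, ‖w z‖ ≤ (1+δ) * (1-β)⁻¹ * C := by
    intro z
    refine (hwnorm z).trans ?_
    have h0 : (0:ℝ) ≤ (1+δ) * (1-β)⁻¹ := by positivity
    exact mul_le_mul_of_nonneg_left (hqS z) h0
  -- the final section
  refine ⟨BGhomExt w, ?_, ?_, ?_⟩
  · exact BGhomExt_continuous hwc (by positivity) hwM
  · intro y
    rcases eq_or_ne y 0 with rfl | hy
    · simp [BGhomExt_zero]
    · rw [BGhomExt_apply _ hy, map_smul, hTw ⟨‖y‖⁻¹ • y, BG_mem_sphere hy⟩,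
        smul_inv_smul₀ (norm_ne_zero_iff.2 hy) y]
  · intro y
    have hgoal : sInf (Norm.norm '' (T ⁻¹' {y})) = BGq T y := rfl
    rw [hgoal]
    rcases eq_or_ne y 0 with rfl | hy
    · simp [BGhomExt_zero, BGq_zero hT]
    · rw [BGhomExt_apply _ hy, norm_smul, Real.norm_of_nonneg (norm_nonneg y), hqhom y hy,
        ← hfactor]
      calc ‖y‖ * ‖w ⟨‖y‖⁻¹ • y, BG_mem_sphere hy⟩‖
          ≤ ‖y‖ * ((1+δ) * (1-β)⁻¹ * BGq T (‖y‖⁻¹ • y)) :=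
            mul_le_mul_of_nonneg_left (hwnorm ⟨‖y‖⁻¹ • y, BG_mem_sphere hy⟩) (norm_nonneg y)
        _ = (1+δ) * (1-β)⁻¹ * (‖y‖ * BGq T (‖y‖⁻¹ • y)) := by ring
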